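/- Let X ∈ ℝ^{m×n} and let (U_k)_{k≥0} ⊆ ℝ^{m×r}, (V_k)_{k≥0} ⊆ ℝ^{r×n} be sequences such that for every k ≥ 1: (i) ⟨U_k − U_{k−1}, ∇_U h(U_{k−1},V_{k−1})⟩_F + (μ_k/2)·‖U_k − U_{k−1}‖_F² ≤ 0 with μ_k ≥ 2σ₁(V_{k−1}·V_{k−1}ᵀ), and (ii) ⟨V_k − V_{k−1}, ∇_V h(U_k,V_{k−1})⟩_F + (λ_k/2)·‖V_k − V_{k−1}‖_F² ≤ 0 with λ_k ≥ 2σ₁(U_kᵀ·U_k), where h(U,V) = ‖X − U·V‖_F², ∇_U h(U,V) = −2(X − U·V)·Vᵀ, and ∇_V h(U,V) = −2Uᵀ·(X − U·V). Then the objective values are monotonically non-increasing: h(U_k, V_k) ≤ h(U_{k−1}, V_{k−1}) for every k ≥ 1; moreover h(U_k,V_k) ≤ h(U_{k−1},V_{k−1}) − ((μ_k − 2σ₁(V_{k−1}V_{k−1}ᵀ))/2)‖U_k − U_{k−1}‖_F² − ((λ_k − 2σ₁(U_kᵀU_k))/2)‖V_k − V_{k−1}‖_F². -/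

import Mathlib

open Matrix

/-- The largest eigenvalue of a real symmetric (Hermitian) matrix. -/
noncomputable def maxEigenvalue {r : ℕ} (S : Matrix (Fin r) (Fin r) ℝ) : ℝ :=
  if h : S.IsHermitian then ⨆ i, h.eigenvalues i else 0

lemma my_trace_transpose_mul_self_nonneg {a b : ℕ} (A : Matrix (Fin a) (Fin b) ℝ) :
    0 ≤ Matrix.trace (Aᵀ * A) := by
  simp only [Matrix.trace, Matrix.diag, Matrix.mul_apply, Matrix.transpose_apply]
  exact Finset.sum_nonneg fun j _ => Finset.sum_nonneg fun i _ => mul_self_nonneg _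

lemma psd_trace_mul_nonneg {a : ℕ} {P Q : Matrix (Fin a) (Fin a) ℝ}
    (hP : P.PosSemidef) (hQ : Q.PosSemidef) : 0 ≤ Matrix.trace (P * Q) := by
  obtain ⟨A, rfl⟩ : ∃ A : Matrix (Fin a) (Fin a) ℝ, P = Aᴴ * A := by
    open MatrixOrder in
    obtain ⟨C, hC⟩ := CStarAlgebra.nonneg_iff_eq_star_mul_self.mp hP.nonneg
    exact ⟨C, hC⟩
  obtain ⟨B, rfl⟩ : ∃ B : Matrix (Fin a) (Fin a) ℝ, Q = Bᴴ * B := by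
    open MatrixOrder in
    obtain ⟨C, hC⟩ := CStarAlgebra.nonneg_iff_eq_star_mul_self.mp hQ.nonneg
    exact ⟨C, hC⟩
  have h : Matrix.trace (Aᴴ * A * (Bᴴ * B)) = Matrix.trace ((A * Bᴴ)ᵀ * (A * Bᴴ)) := by
    rw [← Matrix.mul_assoc, Matrix.trace_mul_cycle (Aᴴ * A) Bᴴ B]
    simp only [Matrix.conjTranspose_eq_transpose_of_trivial, Matrix.transpose_mul,
      Matrix.transpose_transpose, Matrix.mul_assoc]
  rw [h]
  exact my_trace_transpose_mul_self_nonneg _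

lemma eigenvalue_le_max {a : ℕ} {S : Matrix (Fin a) (Fin a) ℝ} (hS : S.IsHermitian) (i : Fin a) :
    hS.eigenvalues i ≤ maxEigenvalue S := by
  rw [maxEigenvalue, dif_pos hS]
  exact le_ciSup (Set.Finite.bddAbove (Set.finite_range _)) i

lemma smul_one_sub_posSemidef {a : ℕ} {S : Matrix (Fin a) (Fin a) ℝ} (hS : S.IsHermitian) :
    (maxEigenvalue S • (1 : Matrix (Fin a) (Fin a) ℝ) - S).PosSemidef := by
  have hW := (Matrix.mem_unitaryGroup_iff).mp (hS.eigenvectorUnitary).2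
  have key : maxEigenvalue S • (1 : Matrix (Fin a) (Fin a) ℝ) - S
      = (hS.eigenvectorUnitary : Matrix (Fin a) (Fin a) ℝ) *
        Matrix.diagonal (fun i => maxEigenvalue S - hS.eigenvalues i) *
        (hS.eigenvectorUnitary : Matrix (Fin a) (Fin a) ℝ)ᴴ := by
    nth_rewrite 2 [hS.spectral_theorem]
    have : Matrix.diagonal (fun i => maxEigenvalue S - hS.eigenvalues i)
        = maxEigenvalue S • (1 : Matrix (Fin a) (Fin a) ℝ)
          - Matrix.diagonal (RCLike.ofReal ∘ hS.eigenvalues) := by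
      rw [Matrix.smul_one_eq_diagonal, ← Matrix.diagonal_sub]
      congr 1
    rw [this, Matrix.mul_sub, Matrix.sub_mul]
    congr 1
    rw [Matrix.mul_smul, Matrix.mul_one, Matrix.smul_mul]
    rw [show (hS.eigenvectorUnitary : Matrix (Fin a) (Fin a) ℝ)ᴴ
        = star (hS.eigenvectorUnitary : Matrix (Fin a) (Fin a) ℝ) from rfl, hW]
  rw [key]
  exact (Matrix.posSemidef_diagonal_iff.mpr fun i => by
    simpa using sub_nonneg.mpr (eigenvalue_le_max hS i)).mul_mul_conjTranspose_same _

lemma trace_psd_mul_le {a : ℕ} {P S : Matrix (Fin a) (Fin a) ℝ}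
    (hP : P.PosSemidef) (hS : S.IsHermitian) :
    Matrix.trace (P * S) ≤ maxEigenvalue S * Matrix.trace P := by
  have h := psd_trace_mul_nonneg hP (smul_one_sub_posSemidef hS)
  rw [Matrix.mul_sub, Matrix.trace_sub, Matrix.mul_smul, Matrix.trace_smul, Matrix.mul_one,
    smul_eq_mul] at h
  linarith

lemma expand_sq {p q : ℕ} (E C : Matrix (Fin p) (Fin q) ℝ) :
    Matrix.trace ((E - C)ᵀ * (E - C))
      = Matrix.trace (Eᵀ * E) - 2 * Matrix.trace (Cᵀ * E) + Matrix.trace (Cᵀ * C) := by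
  have h : Matrix.trace (Eᵀ * C) = Matrix.trace (Cᵀ * E) := by
    rw [← Matrix.trace_transpose (Eᵀ * C), Matrix.transpose_mul, Matrix.transpose_transpose]
  simp only [Matrix.transpose_sub, Matrix.sub_mul, Matrix.mul_sub, Matrix.trace_sub]
  linarith

lemma trace_rearrange {p q s : ℕ} (D : Matrix (Fin p) (Fin q) ℝ) (W : Matrix (Fin q) (Fin s) ℝ) :
    Matrix.trace ((D * W)ᵀ * (D * W)) = Matrix.trace ((Dᵀ * D) * (W * Wᵀ)) := by
  rw [Matrix.transpose_mul, Matrix.trace_mul_comm, Matrix.mul_assoc, ← Matrix.mul_assoc W Wᵀ Dᵀ,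
    ← Matrix.mul_assoc D (W * Wᵀ) Dᵀ, Matrix.trace_mul_cycle D (W * Wᵀ) Dᵀ]

lemma inner_grad_eq {p q s : ℕ} (D : Matrix (Fin p) (Fin q) ℝ) (E : Matrix (Fin p) (Fin s) ℝ)
    (W : Matrix (Fin q) (Fin s) ℝ) :
    Matrix.trace (Dᵀ * ((-2 : ℝ) • (E * Wᵀ))) = -2 * Matrix.trace ((D * W)ᵀ * E) := by
  rw [Matrix.mul_smul, Matrix.trace_smul, smul_eq_mul, Matrix.transpose_mul,
    Matrix.trace_mul_cycle Wᵀ Dᵀ E, Matrix.trace_mul_comm]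

/-- Monotone decrease of the PALM objective `h(U,V) = ‖X - U*V‖_F²` along iterates
satisfying the proximal descent conditions (i) and (ii) with step parameters
`μ_k ≥ 2 σ₁(V_{k-1} V_{k-1}ᵀ)` and `λ_k ≥ 2 σ₁(U_kᵀ U_k)` (here the iterate at
"time k" of the paper is `k+1`). The Frobenius inner product is `trace (Aᵀ * B)`
and `‖A‖_F² = trace (Aᵀ * A)`;
`∇_U h(U,V) = -2 (X - U*V) Vᵀ`, `∇_V h(U,V) = -2 Uᵀ (X - U*V)`. -/
theorem stmt_8 {m n r : ℕ} (X : Matrix (Fin m) (Fin n) ℝ)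
    (U : ℕ → Matrix (Fin m) (Fin r) ℝ) (V : ℕ → Matrix (Fin r) (Fin n) ℝ)
    (μ lam : ℕ → ℝ)
    (hUprox : ∀ k : ℕ,
      Matrix.trace ((U (k+1) - U k)ᵀ * ((-2 : ℝ) • ((X - U k * V k) * (V k)ᵀ)))
        + μ (k+1) / 2 * Matrix.trace ((U (k+1) - U k)ᵀ * (U (k+1) - U k)) ≤ 0)
    (hμ : ∀ k : ℕ, 2 * maxEigenvalue (V k * (V k)ᵀ) ≤ μ (k+1))
    (hVprox : ∀ k : ℕ,
      Matrix.trace ((V (k+1) - V k)ᵀ * ((-2 : ℝ) • ((U (k+1))ᵀ * (X - U (k+1) * V k))))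
        + lam (k+1) / 2 * Matrix.trace ((V (k+1) - V k)ᵀ * (V (k+1) - V k)) ≤ 0)
    (hlam : ∀ k : ℕ, 2 * maxEigenvalue ((U (k+1))ᵀ * U (k+1)) ≤ lam (k+1)) :
    ∀ k : ℕ,
      Matrix.trace ((X - U (k+1) * V (k+1))ᵀ * (X - U (k+1) * V (k+1))) ≤
        Matrix.trace ((X - U k * V k)ᵀ * (X - U k * V k)) ∧
      Matrix.trace ((X - U (k+1) * V (k+1))ᵀ * (X - U (k+1) * V (k+1))) ≤
        Matrix.trace ((X - U k * V k)ᵀ * (X - U k * V k))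
          - (μ (k+1) - 2 * maxEigenvalue (V k * (V k)ᵀ)) / 2 *
              Matrix.trace ((U (k+1) - U k)ᵀ * (U (k+1) - U k))
          - (lam (k+1) - 2 * maxEigenvalue ((U (k+1))ᵀ * U (k+1))) / 2 *
              Matrix.trace ((V (k+1) - V k)ᵀ * (V (k+1) - V k)) := by
  intro k
  set E := X - U k * V k with hE
  set D := U (k+1) - U k with hD
  set A := X - U (k+1) * V k with hA
  set Dv := V (k+1) - V k with hDv
  set B := X - U (k+1) * V (k+1) with hB
  -- algebraic identities
  have hArw : A = E - D * V k := by
    rw [hA, hE, hD, Matrix.sub_mul]; abel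
  have hBrw : B = A - U (k+1) * Dv := by
    rw [hB, hA, hDv, Matrix.mul_sub]; abel
  have hUexp := expand_sq E (D * V k)
  rw [← hArw] at hUexp
  have hVexp := expand_sq A (U (k+1) * Dv)
  rw [← hBrw] at hVexp
  -- prox conditions rewritten
  have hU := hUprox k
  rw [inner_grad_eq D E (V k)] at hU
  have hV := hVprox k
  have hVinner : Matrix.trace (Dvᵀ * ((-2 : ℝ) • ((U (k+1))ᵀ * A)))
      = -2 * Matrix.trace ((U (k+1) * Dv)ᵀ * A) := by
    rw [Matrix.mul_smul, Matrix.trace_smul, smul_eq_mul, Matrix.transpose_mul, Matrix.mul_assoc,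
      ← Matrix.mul_assoc]
  rw [hVinner] at hV
  -- spectral bounds
  have hHermV : (V k * (V k)ᵀ).IsHermitian := by
    have := Matrix.isHermitian_mul_conjTranspose_self (V k)
    rwa [Matrix.conjTranspose_eq_transpose_of_trivial] at this
  have hHermU : ((U (k+1))ᵀ * U (k+1)).IsHermitian := by
    have := Matrix.isHermitian_conjTranspose_mul_self (U (k+1))
    rwa [Matrix.conjTranspose_eq_transpose_of_trivial] at this
  have hPSD_D : (Dᵀ * D).PosSemidef := by
    have := Matrix.posSemidef_conjTranspose_mul_self D
    rwa [Matrix.conjTranspose_eq_transpose_of_trivial] at this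
  have hPSD_Dv : (Dv * Dvᵀ).PosSemidef := by
    have := Matrix.posSemidef_self_mul_conjTranspose Dv
    rwa [Matrix.conjTranspose_eq_transpose_of_trivial] at this
  have hb1 : Matrix.trace ((D * V k)ᵀ * (D * V k))
      ≤ maxEigenvalue (V k * (V k)ᵀ) * Matrix.trace (Dᵀ * D) := by
    rw [trace_rearrange]
    exact trace_psd_mul_le hPSD_D hHermV
  have hb2 : Matrix.trace ((U (k+1) * Dv)ᵀ * (U (k+1) * Dv))
      ≤ maxEigenvalue ((U (k+1))ᵀ * U (k+1)) * Matrix.trace (Dvᵀ * Dv) := by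
    rw [trace_rearrange, Matrix.trace_mul_comm]
    have := trace_psd_mul_le hPSD_Dv hHermU
    rwa [Matrix.trace_mul_comm Dv Dvᵀ] at this
  have ht1 : 0 ≤ Matrix.trace (Dᵀ * D) := my_trace_transpose_mul_self_nonneg D
  have ht2 : 0 ≤ Matrix.trace (Dvᵀ * Dv) := my_trace_transpose_mul_self_nonneg Dv
  have hμk := hμ k
  have hlamk := hlam k
  constructor
  · nlinarith [mul_nonneg (sub_nonneg.mpr hμk) ht1, mul_nonneg (sub_nonneg.mpr hlamk) ht2]
  · nlinarith
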